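/- Let L be a division ring with discrete valuation v, and let f, g ∈ L[t] be nonzero polynomials (t central). Then the Newton polygon of the product g·f is the concatenation of the edges of the Newton polygons of f and g, arranged in non-decreasing order of slopes; in particular, its starting point is the vector sum of the starting points of N_f and N_g, and its end point is the vector sum of the end points of N_f and N_g. -/

import Mathlib

/-- The valuation of a coefficient, as an extended real number. -/
noncomputable def evv {L : Type*} (v : L → WithTop ℤ) (x : L) : EReal :=
  WithTop.recTopCoe ⊤ (fun n : ℤ => ((n : ℝ) : EReal)) (v x)

/-- The Newton polygon of a polynomial `f = Σ aᵢ tⁱ`, as the lower convex hull of the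
points `(i, v aᵢ)` (with `aᵢ ≠ 0`): `NP v f x` is the supremum of the values at `x`
of all affine functions lying below all of these points. -/
noncomputable def NP {L : Type*} [DivisionRing L] (v : L → WithTop ℤ)
    (f : Polynomial L) (x : ℝ) : EReal :=
  sSup {y : EReal | ∃ a b : ℝ,
    (∀ i ∈ f.support, ((a * i + b : ℝ) : EReal) ≤ evv v (f.coeff i)) ∧
    y = ((a * x + b : ℝ) : EReal)}


section Val
variable {L : Type*} [DivisionRing L] (v : L → WithTop ℤ)
  (hv0 : ∀ x : L, v x = ⊤ ↔ x = 0)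
  (hadd : ∀ x y : L, min (v x) (v y) ≤ v (x + y))
  (hmul : ∀ x y : L, v (x * y) = v x + v y)

include hv0 hmul in
lemma v_one' : v 1 = 0 := by
  have h := hmul 1 1
  rw [one_mul] at h
  rcases h1 : v 1 with _ | z
  · exact absurd ((hv0 1).1 h1) one_ne_zero
  · rw [h1, WithTop.some_eq_coe] at h
    have hz : z = z + z := by exact_mod_cast h
    have : z = 0 := by omega
    rw [WithTop.some_eq_coe, this]; rfl

include hv0 hmul in
lemma v_neg' (x : L) : v (-x) = v x := by
  have hm1 : v (-1 : L) = 0 := by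
    have h := hmul (-1 : L) (-1)
    rw [neg_mul_neg, one_mul, v_one' v hv0 hmul] at h
    rcases h1 : v (-1 : L) with _ | z
    · rw [h1] at h; simp only [WithTop.none_eq_top, top_add] at h; exact absurd h.symm (by simp)
    · rw [h1, WithTop.some_eq_coe] at h
      have hz : (0:ℤ) = z + z := by exact_mod_cast h
      have : z = 0 := by omega
      rw [WithTop.some_eq_coe, this]; rfl
  calc v (-x) = v ((-1) * x) := by rw [neg_one_mul]
  _ = v x := by rw [hmul, hm1, zero_add]

include hv0 hadd in
lemma v_sum_ge' {ι : Type*} (s : Finset ι) (F : ι → L) (m : WithTop ℤ)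
    (h : ∀ p ∈ s, m ≤ v (F p)) : m ≤ v (∑ p ∈ s, F p) := by
  classical
  induction s using Finset.cons_induction with
  | empty => simp [(hv0 0).2 rfl]
  | cons p s hp ih =>
    rw [Finset.sum_cons]
    refine le_trans (le_min (h p (by simp)) (ih fun q hq => h q (by simp [hq]))) (hadd _ _)

include hv0 hadd hmul in
lemma v_add_eq' (x y : L) (hxy : v x < v y) : v (x + y) = v x := by
  refine le_antisymm ?_ (le_trans (le_min le_rfl hxy.le) (hadd x y))
  by_contra hlt
  push_neg at hlt
  have h2 : v x < v (x + y + (-y)) := by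
    refine lt_of_lt_of_le ?_ (hadd (x + y) (-y))
    rw [v_neg' v hv0 hmul]
    exact lt_min hlt hxy
  rw [add_neg_cancel_right] at h2
  exact lt_irrefl _ h2

include hv0 hadd hmul in
lemma v_sum_eq' {ι : Type*} [DecidableEq ι] (s : Finset ι) (F : ι → L) (p₀ : ι) (hp₀ : p₀ ∈ s)
    (h : ∀ p ∈ s, p ≠ p₀ → v (F p₀) < v (F p)) :
    v (∑ p ∈ s, F p) = v (F p₀) := by
  rw [← Finset.add_sum_erase s F hp₀]
  rcases h0 : v (F p₀) with _ | z
  · have he : s.erase p₀ = ∅ := by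
      refine Finset.eq_empty_of_forall_notMem fun p hp => ?_
      have := h p (Finset.mem_of_mem_erase hp) (Finset.ne_of_mem_erase hp)
      rw [h0] at this
      exact absurd this (not_lt_of_ge le_top)
    rw [he, Finset.sum_empty, add_zero, h0]
  · have hrest : v (F p₀) < v (∑ p ∈ s.erase p₀, F p) := by
      rw [h0]
      refine lt_of_lt_of_le (show (z : WithTop ℤ) < ((z + 1 : ℤ) : WithTop ℤ) by
        exact_mod_cast lt_add_one z) ?_
      refine v_sum_ge' v hv0 hadd _ _ _ fun p hp => ?_
      have hlt := h p (Finset.mem_of_mem_erase hp) (Finset.ne_of_mem_erase hp)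
      rw [h0] at hlt
      rcases hq : v (F p) with _ | w
      · exact le_top
      · have hzw : z < w := WithTop.coe_lt_coe.mp (by rw [hq, WithTop.some_eq_coe] at hlt; exact hlt)
        rw [WithTop.some_eq_coe]
        exact WithTop.coe_le_coe.mpr (by omega)
    rw [v_add_eq' v hv0 hadd hmul _ _ hrest, h0]

end Val


section Poly
open Polynomial

variable {L : Type*} [DivisionRing L] (v : L → WithTop ℤ)

/-- Integer value of the valuation of a coefficient. -/
noncomputable def zz (f : Polynomial L) (i : ℕ) : ℤ := (v (f.coeff i)).untopD 0

/-- Real value of the valuation of a coefficient. -/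
noncomputable def cc (f : Polynomial L) (i : ℕ) : ℝ := ((zz v f i : ℤ) : ℝ)

variable (hv0 : ∀ x : L, v x = ⊤ ↔ x = 0)
  (hadd : ∀ x y : L, min (v x) (v y) ≤ v (x + y))
  (hmul : ∀ x y : L, v (x * y) = v x + v y)

include hv0 in
lemma v_coeff_eq (f : Polynomial L) (i : ℕ) (hi : i ∈ f.support) :
    v (f.coeff i) = ((zz v f i : ℤ) : WithTop ℤ) := by
  unfold zz
  rcases hq : v (f.coeff i) with _ | z
  · exact absurd ((hv0 _).mp hq) (Polynomial.mem_support_iff.mp hi)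
  · simp [WithTop.some_eq_coe, WithTop.untopD_coe]

include hv0 in
lemma evv_coeff (f : Polynomial L) (i : ℕ) (hi : i ∈ f.support) :
    evv v (f.coeff i) = ((cc v f i : ℝ) : EReal) := by
  unfold evv cc
  rw [v_coeff_eq v hv0 f i hi, WithTop.recTopCoe_coe]

/-- The intercept function: minimum of `cc i - a*i` over the support. -/
noncomputable def BB {f : Polynomial L} (hf : f.support.Nonempty) (a : ℝ) : ℝ :=
  f.support.inf' hf (fun i => cc v f i - a * i)

lemma BB_le {f : Polynomial L} (hf : f.support.Nonempty) (a : ℝ) {i : ℕ}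
    (hi : i ∈ f.support) : BB v hf a ≤ cc v f i - a * i :=
  Finset.inf'_le _ hi

lemma le_BB {f : Polynomial L} (hf : f.support.Nonempty) (a : ℝ) (m : ℝ)
    (h : ∀ i ∈ f.support, m ≤ cc v f i - a * i) : m ≤ BB v hf a :=
  Finset.le_inf' _ _ h

include hv0 hadd hmul in
lemma prod_ge (f g : Polynomial L) (i : ℕ) (hi : i ∈ (g * f).support) :
    ∃ k ∈ g.support, ∃ j ∈ f.support, k + j = i ∧
      cc v g k + cc v f j ≤ cc v (g * f) i := by
  classical
  have hne : (Finset.HasAntidiagonal.antidiagonal i).Nonempty := ⟨(0, i), by simp⟩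
  set m := (Finset.HasAntidiagonal.antidiagonal i).inf' hne
    (fun p => v (g.coeff p.1 * f.coeff p.2)) with hmdef
  have h1 : m ≤ v ((g * f).coeff i) := by
    rw [Polynomial.coeff_mul]
    exact v_sum_ge' v hv0 hadd _ _ m (fun p hp => Finset.inf'_le _ hp)
  have htop : v ((g * f).coeff i) ≠ ⊤ := fun ht =>
    (Polynomial.mem_support_iff.mp hi) ((hv0 _).mp ht)
  obtain ⟨p, hp, hm⟩ := Finset.exists_mem_eq_inf' hne
    (fun p => v (g.coeff p.1 * f.coeff p.2))
  have hmne : m ≠ ⊤ := fun ht => htop (top_le_iff.mp (ht ▸ h1))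
  rw [hmdef, hm, hmul] at hmne
  have hkg : g.coeff p.1 ≠ 0 := by
    intro h0
    exact hmne (by rw [(hv0 _).mpr h0, top_add])
  have hjf : f.coeff p.2 ≠ 0 := by
    intro h0
    exact hmne (by rw [(hv0 _).mpr h0, add_top])
  have hpg : p.1 ∈ g.support := Polynomial.mem_support_iff.mpr hkg
  have hpf : p.2 ∈ f.support := Polynomial.mem_support_iff.mpr hjf
  refine ⟨p.1, hpg, p.2, hpf, Finset.HasAntidiagonal.mem_antidiagonal.mp hp, ?_⟩
  have h2 : ((zz v g p.1 + zz v f p.2 : ℤ) : WithTop ℤ) ≤ ((zz v (g * f) i : ℤ) : WithTop ℤ) := by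
    rw [← v_coeff_eq v hv0 (g * f) i hi]
    refine le_trans ?_ h1
    rw [hmdef, hm, hmul, v_coeff_eq v hv0 g _ hpg, v_coeff_eq v hv0 f _ hpf]
    push_cast
    exact le_rfl
  have h3 : zz v g p.1 + zz v f p.2 ≤ zz v (g * f) i := by exact_mod_cast h2
  unfold cc
  exact_mod_cast h3

end Poly

section Poly2
open Polynomial

variable {L : Type*} [DivisionRing L] (v : L → WithTop ℤ)
  (hv0 : ∀ x : L, v x = ⊤ ↔ x = 0)
  (hadd : ∀ x y : L, min (v x) (v y) ≤ v (x + y))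
  (hmul : ∀ x y : L, v (x * y) = v x + v y)

include hv0 hadd hmul in
lemma prod_eq (f g : Polynomial L) (hf : f.support.Nonempty) (hg : g.support.Nonempty)
    (a : ℝ) :
    ∃ i ∈ (g * f).support, cc v (g * f) i - a * i = BB v hf a + BB v hg a := by
  classical
  obtain ⟨j₁, hj₁, hj₁e⟩ := Finset.exists_mem_eq_inf' hf (fun i => cc v f i - a * i)
  obtain ⟨k₁, hk₁, hk₁e⟩ := Finset.exists_mem_eq_inf' hg (fun i => cc v g i - a * i)
  set Af := f.support.filter (fun j => cc v f j - a * j = BB v hf a) with hAf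
  set Ag := g.support.filter (fun k => cc v g k - a * k = BB v hg a) with hAg
  have hAfne : Af.Nonempty := ⟨j₁, Finset.mem_filter.mpr ⟨hj₁, hj₁e.symm⟩⟩
  have hAgne : Ag.Nonempty := ⟨k₁, Finset.mem_filter.mpr ⟨hk₁, hk₁e.symm⟩⟩
  set j₀ := Af.min' hAfne with hj₀
  set k₀ := Ag.min' hAgne with hk₀
  have hj₀Af : j₀ ∈ Af := Af.min'_mem hAfne
  have hk₀Ag : k₀ ∈ Ag := Ag.min'_mem hAgne
  have hj₀f : j₀ ∈ f.support := (Finset.mem_filter.mp hj₀Af).1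
  have hk₀g : k₀ ∈ g.support := (Finset.mem_filter.mp hk₀Ag).1
  have ej : cc v f j₀ - a * j₀ = BB v hf a := (Finset.mem_filter.mp hj₀Af).2
  have ek : cc v g k₀ - a * k₀ = BB v hg a := (Finset.mem_filter.mp hk₀Ag).2
  have hj₀min : ∀ j ∈ f.support, j < j₀ → BB v hf a < cc v f j - a * j := by
    intro j hj hlt
    rcases lt_or_eq_of_le (BB_le v hf a hj) with h | h
    · exact h
    · exact absurd (Af.min'_le j (Finset.mem_filter.mpr ⟨hj, h.symm⟩)) (not_le.mpr hlt)
  have hk₀min : ∀ k ∈ g.support, k < k₀ → BB v hg a < cc v g k - a * k := by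
    intro k hk hlt
    rcases lt_or_eq_of_le (BB_le v hg a hk) with h | h
    · exact h
    · exact absurd (Ag.min'_le k (Finset.mem_filter.mpr ⟨hk, h.symm⟩)) (not_le.mpr hlt)
  have hvp : v (g.coeff k₀ * f.coeff j₀) = ((zz v g k₀ + zz v f j₀ : ℤ) : WithTop ℤ) := by
    rw [hmul, v_coeff_eq v hv0 g _ hk₀g, v_coeff_eq v hv0 f _ hj₀f]
    push_cast
    rfl
  have hcoeff : v ((g * f).coeff (k₀ + j₀)) = v (g.coeff k₀ * f.coeff j₀) := by
    rw [Polynomial.coeff_mul]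
    refine v_sum_eq' v hv0 hadd hmul _ _ (k₀, j₀) (Finset.HasAntidiagonal.mem_antidiagonal.mpr rfl) ?_
    rintro ⟨k, j⟩ hp hne
    have hkj : k + j = k₀ + j₀ := Finset.HasAntidiagonal.mem_antidiagonal.mp hp
    by_cases hk0 : g.coeff k = 0
    · rw [show v (g.coeff k * f.coeff j) = ⊤ by rw [hmul, (hv0 _).mpr hk0, top_add]]
      rw [hvp]
      exact WithTop.coe_lt_top _
    by_cases hj0 : f.coeff j = 0
    · rw [show v (g.coeff k * f.coeff j) = ⊤ by rw [hmul, (hv0 _).mpr hj0, add_top]]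
      rw [hvp]
      exact WithTop.coe_lt_top _
    have hkg : k ∈ g.support := Polynomial.mem_support_iff.mpr hk0
    have hjf : j ∈ f.support := Polynomial.mem_support_iff.mpr hj0
    have hkne : k ≠ k₀ := by
      intro h
      apply hne
      have hj' : j = j₀ := by omega
      rw [h, hj']
    have hcast : (k : ℝ) + (j : ℝ) = (k₀ : ℝ) + (j₀ : ℝ) := by exact_mod_cast hkj
    have haa : a * (k : ℝ) + a * (j : ℝ) = a * (k₀ : ℝ) + a * (j₀ : ℝ) := by
      rw [← mul_add, ← mul_add, hcast]
    have hreal : cc v g k₀ + cc v f j₀ < cc v g k + cc v f j := by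
      rcases lt_or_gt_of_ne hkne with hlt | hgt
      · have h1 := hk₀min k hkg hlt
        have h2 := BB_le v hf a hjf
        linarith
      · have hjlt : j < j₀ := by omega
        have h1 := hj₀min j hjf hjlt
        have h2 := BB_le v hg a hkg
        linarith
    rw [hvp, hmul, v_coeff_eq v hv0 g _ hkg, v_coeff_eq v hv0 f _ hjf]
    have hz : zz v g k₀ + zz v f j₀ < zz v g k + zz v f j := by
      have : (zz v g k₀ : ℝ) + (zz v f j₀ : ℝ) < (zz v g k : ℝ) + (zz v f j : ℝ) := hreal
      exact_mod_cast this
    exact_mod_cast hz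
  have hne0 : (g * f).coeff (k₀ + j₀) ≠ 0 := by
    intro h0
    have := hcoeff
    rw [(hv0 _).mpr h0, hvp] at this
    exact (WithTop.coe_ne_top (a := (zz v g k₀ + zz v f j₀ : ℤ))) this.symm
  have hmem : k₀ + j₀ ∈ (g * f).support := Polynomial.mem_support_iff.mpr hne0
  refine ⟨k₀ + j₀, hmem, ?_⟩
  have hzz : zz v (g * f) (k₀ + j₀) = zz v g k₀ + zz v f j₀ := by
    unfold zz
    rw [hcoeff, hvp]
    rfl
  have hccv : cc v (g * f) (k₀ + j₀) = cc v g k₀ + cc v f j₀ := by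
    unfold cc
    rw [hzz]
    push_cast
    ring
  have hicast : ((k₀ + j₀ : ℕ) : ℝ) = (k₀ : ℝ) + (j₀ : ℝ) := by push_cast; ring
  rw [hccv, hicast]
  have : a * ((k₀ : ℝ) + (j₀ : ℝ)) = a * k₀ + a * j₀ := by ring
  linarith

include hv0 hadd hmul in
lemma BB_mul (f g : Polynomial L) (hf : f.support.Nonempty) (hg : g.support.Nonempty)
    (hgf : (g * f).support.Nonempty) (a : ℝ) :
    BB v hgf a = BB v hf a + BB v hg a := by
  refine le_antisymm ?_ ?_
  · obtain ⟨i, hi, he⟩ := prod_eq v hv0 hadd hmul f g hf hg a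
    rw [← he]
    exact BB_le v hgf a hi
  · refine le_BB v hgf a _ fun i hi => ?_
    obtain ⟨k, hk, j, hj, hkj, hle⟩ := prod_ge v hv0 hadd hmul f g i hi
    have h1 := BB_le v hg a hk
    have h2 := BB_le v hf a hj
    have hcast : (i : ℝ) = (k : ℝ) + (j : ℝ) := by exact_mod_cast hkj.symm
    have haa : a * (i : ℝ) = a * k + a * j := by rw [hcast]; ring
    linarith

end Poly2

section NPsec
open Polynomial

variable {L : Type*} [DivisionRing L] (v : L → WithTop ℤ)
  (hv0 : ∀ x : L, v x = ⊤ ↔ x = 0)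

lemma NP_ge {f : Polynomial L} (x a b : ℝ)
    (hfeas : ∀ i ∈ f.support, ((a * i + b : ℝ) : EReal) ≤ evv v (f.coeff i)) :
    ((a * x + b : ℝ) : EReal) ≤ NP v f x :=
  le_sSup ⟨a, b, hfeas, rfl⟩

lemma NP_le {f : Polynomial L} (x : ℝ) (t : EReal)
    (h : ∀ a b : ℝ, (∀ i ∈ f.support, ((a * i + b : ℝ) : EReal) ≤ evv v (f.coeff i)) →
      ((a * x + b : ℝ) : EReal) ≤ t) : NP v f x ≤ t := by
  refine sSup_le ?_
  rintro y ⟨a, b, hfe, rfl⟩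
  exact h a b hfe

include hv0 in
lemma feas_BB {f : Polynomial L} (hf : f.support.Nonempty) (a : ℝ) :
    ∀ i ∈ f.support, ((a * i + BB v hf a : ℝ) : EReal) ≤ evv v (f.coeff i) := by
  intro i hi
  rw [evv_coeff v hv0 f i hi]
  exact EReal.coe_le_coe_iff.mpr (by have := BB_le v hf a hi; linarith)

include hv0 in
lemma feas_le_BB {f : Polynomial L} (hf : f.support.Nonempty) (a b : ℝ)
    (hfeas : ∀ i ∈ f.support, ((a * i + b : ℝ) : EReal) ≤ evv v (f.coeff i)) :
    b ≤ BB v hf a := by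
  refine le_BB v hf a b fun i hi => ?_
  have h1 := hfeas i hi
  rw [evv_coeff v hv0 f i hi] at h1
  have h2 : a * i + b ≤ cc v f i := EReal.coe_le_coe_iff.mp h1
  linarith

include hv0 in
lemma NP_touch {f : Polynomial L} (hf : f.support.Nonempty) (a : ℝ) (c d : ℕ)
    (hc : c ∈ f.support) (hd : d ∈ f.support)
    (hce : cc v f c - a * c = BB v hf a) (hde : cc v f d - a * d = BB v hf a)
    (x₁ : ℝ) (hcx : (c : ℝ) ≤ x₁) (hxd : x₁ ≤ (d : ℝ)) :
    NP v f x₁ = ((a * x₁ + BB v hf a : ℝ) : EReal) := by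
  refine le_antisymm ?_ (NP_ge v x₁ a _ (feas_BB v hv0 hf a))
  refine NP_le v x₁ _ fun a' b' hfe => ?_
  refine EReal.coe_le_coe_iff.mpr ?_
  have h1 : a' * c + b' ≤ a * c + BB v hf a := by
    have h0 := hfe c hc
    rw [evv_coeff v hv0 f c hc] at h0
    have h2 := EReal.coe_le_coe_iff.mp h0
    linarith
  have h2 : a' * d + b' ≤ a * d + BB v hf a := by
    have h0 := hfe d hd
    rw [evv_coeff v hv0 f d hd] at h0
    have h2 := EReal.coe_le_coe_iff.mp h0
    linarith
  have hcd : (c : ℝ) ≤ (d : ℝ) := le_trans hcx hxd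
  rcases eq_or_lt_of_le hcd with he | hlt
  · have hx : x₁ = (c : ℝ) := le_antisymm (he ▸ hxd) hcx
    rw [hx]; linarith
  · have H1 : ((d : ℝ) - x₁) * (a' * c + b') ≤ ((d : ℝ) - x₁) * (a * c + BB v hf a) :=
      mul_le_mul_of_nonneg_left h1 (by linarith)
    have H2 : (x₁ - c) * (a' * d + b') ≤ (x₁ - c) * (a * d + BB v hf a) :=
      mul_le_mul_of_nonneg_left h2 (by linarith)
    have key : ((d : ℝ) - c) * (a' * x₁ + b') ≤ ((d : ℝ) - c) * (a * x₁ + BB v hf a) := by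
      nlinarith [H1, H2]
    exact le_of_mul_le_mul_left key (by linarith)

end NPsec

section NPtop
open Polynomial

variable {L : Type*} [DivisionRing L] (v : L → WithTop ℤ)
  (hv0 : ∀ x : L, v x = ⊤ ↔ x = 0)

include hv0 in
lemma NP_top_right {p : Polynomial L} (hp : p ≠ 0) (x : ℝ)
    (hx : (p.natDegree : ℝ) < x) : NP v p x = ⊤ := by
  classical
  have hsupp : p.support.Nonempty := Polynomial.nonempty_support_iff.mpr hp
  set n := p.natDegree with hn
  have hnmem : n ∈ p.support := Polynomial.natDegree_mem_support_of_nonzero hp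
  set M : ℝ := max 0 (p.support.sup' hsupp (fun i => cc v p n - cc v p i)) with hM
  have hfeas : ∀ a : ℝ, M ≤ a →
      ∀ i ∈ p.support, ((a * i + (cc v p n - a * n) : ℝ) : EReal) ≤ evv v (p.coeff i) := by
    intro a ha i hi
    rw [evv_coeff v hv0 p i hi]
    refine EReal.coe_le_coe_iff.mpr ?_
    have hin : i ≤ n := Polynomial.le_natDegree_of_mem_supp i hi
    rcases eq_or_lt_of_le hin with he | hlt
    · rw [he]; linarith
    · have h1 : cc v p n - cc v p i ≤ M :=
        le_trans (Finset.le_sup' (fun i => cc v p n - cc v p i) hi) (le_max_right _ _)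
      have h2 : (1 : ℝ) ≤ (n : ℝ) - i := by
        have : (i : ℝ) + 1 ≤ n := by exact_mod_cast hlt
        linarith
      have h3 : (0 : ℝ) ≤ a := le_trans (le_max_left _ _) ha
      have h4 : M * 1 ≤ a * ((n : ℝ) - i) :=
        mul_le_mul ha h2 zero_le_one (by linarith)
      nlinarith
  rw [NP, sSup_eq_top]
  intro b hb
  induction b using EReal.rec with
  | bot =>
    exact ⟨((M * x + (cc v p n - M * n) : ℝ) : EReal), ⟨M, _, hfeas M le_rfl, rfl⟩,
      EReal.bot_lt_coe _⟩
  | coe r =>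
    set a : ℝ := max M ((r + 1 - cc v p n) / (x - n)) with ha
    have haM : M ≤ a := le_max_left _ _
    refine ⟨((a * x + (cc v p n - a * n) : ℝ) : EReal), ⟨a, _, hfeas a haM, rfl⟩, ?_⟩
    refine EReal.coe_lt_coe_iff.mpr ?_
    have hxn : (0 : ℝ) < x - n := by linarith
    have h5 : (r + 1 - cc v p n) / (x - n) ≤ a := le_max_right _ _
    have h6 : r + 1 - cc v p n ≤ a * (x - n) := by
      rw [div_le_iff₀ hxn] at h5
      linarith
    nlinarith
  | top => exact absurd hb (lt_irrefl _)

include hv0 in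
lemma NP_top_left {p : Polynomial L} (hp : p ≠ 0) (x : ℝ)
    (hx : x < (p.natTrailingDegree : ℝ)) : NP v p x = ⊤ := by
  classical
  have hsupp : p.support.Nonempty := Polynomial.nonempty_support_iff.mpr hp
  set m := p.natTrailingDegree with hm
  have hmmem : m ∈ p.support := Polynomial.natTrailingDegree_mem_support_of_nonzero hp
  set M : ℝ := max 0 (p.support.sup' hsupp (fun i => cc v p m - cc v p i)) with hM
  have hfeas : ∀ a : ℝ, a ≤ -M →
      ∀ i ∈ p.support, ((a * i + (cc v p m - a * m) : ℝ) : EReal) ≤ evv v (p.coeff i) := by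
    intro a ha i hi
    rw [evv_coeff v hv0 p i hi]
    refine EReal.coe_le_coe_iff.mpr ?_
    have hin : m ≤ i :=
      Polynomial.natTrailingDegree_le_of_ne_zero (Polynomial.mem_support_iff.mp hi)
    rcases eq_or_lt_of_le hin with he | hlt
    · rw [← he]; linarith
    · have h1 : cc v p m - cc v p i ≤ M :=
        le_trans (Finset.le_sup' (fun i => cc v p m - cc v p i) hi) (le_max_right _ _)
      have h2 : (1 : ℝ) ≤ (i : ℝ) - m := by
        have : (m : ℝ) + 1 ≤ i := by exact_mod_cast hlt
        linarith
      have h3 : (0 : ℝ) ≤ -a := by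
        have : (0:ℝ) ≤ M := le_max_left _ _
        linarith
      have h4 : M * 1 ≤ (-a) * ((i : ℝ) - m) :=
        mul_le_mul (by linarith) h2 zero_le_one (by linarith)
      nlinarith
  rw [NP, sSup_eq_top]
  intro b hb
  induction b using EReal.rec with
  | bot =>
    exact ⟨(((-M) * x + (cc v p m - (-M) * m) : ℝ) : EReal), ⟨-M, _, hfeas (-M) le_rfl, rfl⟩,
      EReal.bot_lt_coe _⟩
  | coe r =>
    set a : ℝ := min (-M) (-((r + 1 - cc v p m) / ((m : ℝ) - x))) with ha
    have haM : a ≤ -M := min_le_left _ _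
    refine ⟨((a * x + (cc v p m - a * m) : ℝ) : EReal), ⟨a, _, hfeas a haM, rfl⟩, ?_⟩
    refine EReal.coe_lt_coe_iff.mpr ?_
    have hxm : (0 : ℝ) < (m : ℝ) - x := by linarith
    have h5 : a ≤ -((r + 1 - cc v p m) / ((m : ℝ) - x)) := min_le_right _ _
    have h6 : r + 1 - cc v p m ≤ (-a) * ((m : ℝ) - x) := by
      have h7 : (r + 1 - cc v p m) / ((m : ℝ) - x) ≤ -a := by linarith
      rw [div_le_iff₀ hxm] at h7
      linarith
    nlinarith
  | top => exact absurd hb (lt_irrefl _)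

end NPtop

section Argmax
open Polynomial

variable {L : Type*} [DivisionRing L] (v : L → WithTop ℤ)

lemma exists_argmax {p : Polynomial L} (hp : p ≠ 0) (hsupp : p.support.Nonempty) (x : ℝ)
    (hxl : (p.natTrailingDegree : ℝ) ≤ x) (hxr : x ≤ (p.natDegree : ℝ)) :
    ∃ A : ℝ, ∀ a : ℝ, a * x + BB v hsupp a ≤ A * x + BB v hsupp A := by
  classical
  set n := p.natDegree with hn
  set m := p.natTrailingDegree with hm
  have hnmem : n ∈ p.support := Polynomial.natDegree_mem_support_of_nonzero hp
  have hmmem : m ∈ p.support := Polynomial.natTrailingDegree_mem_support_of_nonzero hp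
  set M : ℝ := max 0 (p.support.sup' hsupp (fun i => cc v p n - cc v p i)) with hMd
  set M' : ℝ := max 0 (p.support.sup' hsupp (fun i => cc v p m - cc v p i)) with hM'd
  have hM0 : (0:ℝ) ≤ M := le_max_left _ _
  have hM'0 : (0:ℝ) ≤ M' := le_max_left _ _
  -- right regime
  have hRight : ∀ a : ℝ, M ≤ a → BB v hsupp a = cc v p n - a * n := by
    intro a ha
    refine le_antisymm (BB_le v hsupp a hnmem) (le_BB v hsupp a _ fun i hi => ?_)
    have hin : i ≤ n := Polynomial.le_natDegree_of_mem_supp i hi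
    rcases eq_or_lt_of_le hin with he | hlt
    · rw [he]
    · have h1 : cc v p n - cc v p i ≤ M :=
        le_trans (Finset.le_sup' (fun i => cc v p n - cc v p i) hi) (le_max_right _ _)
      have h2 : (1 : ℝ) ≤ (n : ℝ) - i := by
        have : (i : ℝ) + 1 ≤ n := by exact_mod_cast hlt
        linarith
      have h4 : M * 1 ≤ a * ((n : ℝ) - i) :=
        mul_le_mul ha h2 zero_le_one (by linarith)
      linarith
  have hLeft : ∀ a : ℝ, a ≤ -M' → BB v hsupp a = cc v p m - a * m := by
    intro a ha
    refine le_antisymm (BB_le v hsupp a hmmem) (le_BB v hsupp a _ fun i hi => ?_)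
    have hin : m ≤ i :=
      Polynomial.natTrailingDegree_le_of_ne_zero (Polynomial.mem_support_iff.mp hi)
    rcases eq_or_lt_of_le hin with he | hlt
    · rw [← he]
    · have h1 : cc v p m - cc v p i ≤ M' :=
        le_trans (Finset.le_sup' (fun i => cc v p m - cc v p i) hi) (le_max_right _ _)
      have h2 : (1 : ℝ) ≤ (i : ℝ) - m := by
        have : (m : ℝ) + 1 ≤ i := by exact_mod_cast hlt
        linarith
      have h4 : M' * 1 ≤ (-a) * ((i : ℝ) - m) :=
        mul_le_mul (by linarith) h2 zero_le_one (by linarith)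
      linarith
  set φ : ℝ → ℝ := fun a => a * x + BB v hsupp a with hφ
  have hcont : ContinuousOn φ (Set.Icc (-M' - 1) (M + 1)) := by
    refine ContinuousOn.add (Continuous.continuousOn (continuous_id.mul continuous_const)) ?_
    exact ContinuousOn.finset_inf'_apply hsupp fun i _ =>
      (Continuous.continuousOn (continuous_const.sub (continuous_id.mul continuous_const)))
  obtain ⟨A, hAK, hAmax⟩ := (isCompact_Icc (a := -M' - 1) (b := M + 1)).exists_isMaxOn
    (Set.nonempty_Icc.mpr (by linarith)) hcont
  refine ⟨A, fun a => ?_⟩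
  have hMK : M ∈ Set.Icc (-M' - 1) (M + 1) := Set.mem_Icc.mpr ⟨by linarith, by linarith⟩
  have hM'K : -M' ∈ Set.Icc (-M' - 1) (M + 1) := Set.mem_Icc.mpr ⟨by linarith, by linarith⟩
  rcases le_or_gt a (M + 1) with hu | hu
  · rcases le_or_gt (-M' - 1) a with hl | hl
    · exact hAmax (Set.mem_Icc.mpr ⟨hl, hu⟩)
    · -- a < -M' - 1 : compare with φ (-M')
      have h1 : φ a ≤ φ (-M') := by
        simp only [hφ]
        rw [hLeft a (by linarith), hLeft (-M') le_rfl]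
        have : a * (x - m) ≤ (-M') * (x - m) :=
          mul_le_mul_of_nonneg_right (by linarith) (by linarith)
        nlinarith
      exact le_trans h1 (hAmax hM'K)
  · -- M + 1 < a : compare with φ M
    have h1 : φ a ≤ φ M := by
      simp only [hφ]
      rw [hRight a (by linarith), hRight M le_rfl]
      have : a * (x - n) ≤ M * (x - n) := by
        have hxn : x - (n:ℝ) ≤ 0 := by linarith
        nlinarith
      nlinarith
    exact le_trans h1 (hAmax hMK)

lemma BB_pert {f : Polynomial L} (hsupp : f.support.Nonempty) (A : ℝ) :
    ∃ jm jp : ℕ, jm ∈ f.support ∧ jp ∈ f.support ∧ jm ≤ jp ∧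
      cc v f jm - A * jm = BB v hsupp A ∧ cc v f jp - A * jp = BB v hsupp A ∧
      ∃ δ : ℝ, 0 < δ ∧ ∀ ε : ℝ, 0 < ε → ε ≤ δ →
        BB v hsupp A - ε * jp ≤ BB v hsupp (A + ε) ∧
        BB v hsupp A + ε * jm ≤ BB v hsupp (A - ε) := by
  classical
  obtain ⟨j₁, hj₁, hj₁e⟩ := Finset.exists_mem_eq_inf' hsupp (fun i => cc v f i - A * i)
  set Af := f.support.filter (fun j => cc v f j - A * j = BB v hsupp A) with hAf
  have hAfne : Af.Nonempty := ⟨j₁, Finset.mem_filter.mpr ⟨hj₁, hj₁e.symm⟩⟩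
  set jm := Af.min' hAfne with hjm
  set jp := Af.max' hAfne with hjp
  have hjmA : jm ∈ Af := Af.min'_mem hAfne
  have hjpA : jp ∈ Af := Af.max'_mem hAfne
  have hjmf : jm ∈ f.support := (Finset.mem_filter.mp hjmA).1
  have hjpf : jp ∈ f.support := (Finset.mem_filter.mp hjpA).1
  have ejm : cc v f jm - A * jm = BB v hsupp A := (Finset.mem_filter.mp hjmA).2
  have ejp : cc v f jp - A * jp = BB v hsupp A := (Finset.mem_filter.mp hjpA).2
  set N := f.support \ Af with hN
  set δ : ℝ := if hNe : N.Nonempty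
    then (N.inf' hNe (fun j => cc v f j - A * j - BB v hsupp A)) / (f.natDegree + 1)
    else 1 with hδ
  have hgap : ∀ j ∈ N, δ * ((f.natDegree : ℝ) + 1) ≤ cc v f j - A * j - BB v hsupp A := by
    intro j hj
    have hNe : N.Nonempty := ⟨j, hj⟩
    rw [hδ]
    simp only [dif_pos hNe]
    rw [div_mul_cancel₀]
    · exact Finset.inf'_le _ hj
    · positivity
  have hδ0 : 0 < δ := by
    rw [hδ]
    split_ifs with hNe
    · refine div_pos ?_ (by positivity)
      refine (Finset.lt_inf'_iff _).mpr fun j hj => ?_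
      have hjf : j ∈ f.support := (Finset.mem_sdiff.mp hj).1
      have hjA : j ∉ Af := (Finset.mem_sdiff.mp hj).2
      rcases lt_or_eq_of_le (BB_le v hsupp A hjf) with h | h
      · linarith
      · exact absurd (Finset.mem_filter.mpr ⟨hjf, h.symm⟩) hjA
    · exact one_pos
  refine ⟨jm, jp, hjmf, hjpf, Af.min'_le jp hjpA, ejm, ejp, δ, hδ0, fun ε hε hεδ => ?_⟩
  have hjn : ∀ j ∈ f.support, (j : ℝ) ≤ f.natDegree := fun j hj => by
    exact_mod_cast Polynomial.le_natDegree_of_mem_supp j hj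
  constructor
  · refine le_BB v hsupp _ _ fun j hj => ?_
    by_cases hjAf : j ∈ Af
    · have he : cc v f j - A * j = BB v hsupp A := (Finset.mem_filter.mp hjAf).2
      have hjjp : (j : ℝ) ≤ jp := by exact_mod_cast Af.le_max' j hjAf
      nlinarith
    · have hg := hgap j (Finset.mem_sdiff.mpr ⟨hj, hjAf⟩)
      have h1 : ε * j ≤ δ * ((f.natDegree : ℝ) + 1) := by
        have := hjn j hj
        nlinarith
      nlinarith [mul_nonneg hε.le (Nat.cast_nonneg jp : (0:ℝ) ≤ jp)]
  · refine le_BB v hsupp _ _ fun j hj => ?_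
    by_cases hjAf : j ∈ Af
    · have he : cc v f j - A * j = BB v hsupp A := (Finset.mem_filter.mp hjAf).2
      have hjjm : (jm : ℝ) ≤ j := by exact_mod_cast Af.min'_le j hjAf
      nlinarith
    · have hg := hgap j (Finset.mem_sdiff.mpr ⟨hj, hjAf⟩)
      have h1 : ε * jm ≤ δ * ((f.natDegree : ℝ) + 1) := by
        have := hjn jm hjmf
        nlinarith
      nlinarith [mul_nonneg hε.le (Nat.cast_nonneg j : (0:ℝ) ≤ j)]

end Argmax

lemma evv_mul {L : Type*} [DivisionRing L] (v : L → WithTop ℤ)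
    (hmul : ∀ x y : L, v (x * y) = v x + v y) (x y : L) :
    evv v (x * y) = evv v x + evv v y := by
  unfold evv
  rw [hmul]
  rcases hx : v x with _ | zx <;> rcases hy : v y with _ | zy <;>
    simp only [WithTop.none_eq_top, WithTop.some_eq_coe, top_add, add_top,
      WithTop.recTopCoe_top, WithTop.recTopCoe_coe]
  · exact EReal.top_add_top.symm
  · exact (EReal.top_add_coe _).symm
  · exact (EReal.coe_add_top _).symm
  · rw [← WithTop.coe_add, WithTop.recTopCoe_coe, ← EReal.coe_add]
    norm_num

/-- The Newton polygon of a product `g·f`: its starting point is the vector sum of the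
starting points of `N_f` and `N_g`, its end point is the vector sum of the end points
of `N_f` and `N_g`, and its edges are exactly the edges of `N_f` and `N_g` concatenated
in non-decreasing order of slopes — expressed by saying that the lower convex hull
function of `N_{g·f}` is the infimal convolution of those of `N_f` and `N_g`. -/
theorem stmt8 {L : Type*} [DivisionRing L] (v : L → WithTop ℤ)
    (hv0 : ∀ x : L, v x = ⊤ ↔ x = 0)
    (hadd : ∀ x y : L, min (v x) (v y) ≤ v (x + y))
    (hmul : ∀ x y : L, v (x * y) = v x + v y)
    (f g : Polynomial L) (hf : f ≠ 0) (hg : g ≠ 0) :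
    (g * f).natTrailingDegree = g.natTrailingDegree + f.natTrailingDegree ∧
    evv v (g * f).trailingCoeff = evv v g.trailingCoeff + evv v f.trailingCoeff ∧
    (g * f).natDegree = g.natDegree + f.natDegree ∧
    evv v (g * f).leadingCoeff = evv v g.leadingCoeff + evv v f.leadingCoeff ∧
    (∀ x : ℝ, NP v (g * f) x =
      sInf {z : EReal | ∃ x₁ x₂ : ℝ, x₁ + x₂ = x ∧ z = NP v f x₁ + NP v g x₂}) := by
  classical
  have hgf : g * f ≠ 0 := mul_ne_zero hg hf
  have hfs : f.support.Nonempty := Polynomial.nonempty_support_iff.mpr hf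
  have hgs : g.support.Nonempty := Polynomial.nonempty_support_iff.mpr hg
  have hps : (g * f).support.Nonempty := Polynomial.nonempty_support_iff.mpr hgf
  refine ⟨Polynomial.natTrailingDegree_mul hg hf, ?_, Polynomial.natDegree_mul hg hf, ?_, ?_⟩
  · rw [Polynomial.trailingCoeff_mul, evv_mul v hmul]
  · rw [Polynomial.leadingCoeff_mul, evv_mul v hmul]
  intro x
  have hle : NP v (g * f) x ≤
      sInf {z : EReal | ∃ x₁ x₂ : ℝ, x₁ + x₂ = x ∧ z = NP v f x₁ + NP v g x₂} := by
    refine le_sInf ?_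
    rintro z ⟨x₁, x₂, hx12, rfl⟩
    refine NP_le v x _ fun a b hfeas => ?_
    have hb : b ≤ BB v hps a := feas_le_BB v hv0 hps a b hfeas
    have hBm := BB_mul v hv0 hadd hmul f g hfs hgs hps a
    have e1 := NP_ge v x₁ a (BB v hfs a) (feas_BB v hv0 hfs a)
    have e2 := NP_ge v x₂ a (BB v hgs a) (feas_BB v hv0 hgs a)
    calc ((a * x + b : ℝ) : EReal)
        ≤ (((a * x₁ + BB v hfs a) + (a * x₂ + BB v hgs a) : ℝ) : EReal) := by
          refine EReal.coe_le_coe_iff.mpr ?_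
          have hxx : a * x = a * x₁ + a * x₂ := by rw [← hx12]; ring
          linarith
      _ = ((a * x₁ + BB v hfs a : ℝ) : EReal) + ((a * x₂ + BB v hgs a : ℝ) : EReal) :=
          EReal.coe_add _ _
      _ ≤ NP v f x₁ + NP v g x₂ := add_le_add e1 e2
  by_cases hxl : x < ((g * f).natTrailingDegree : ℝ)
  · have htop := NP_top_left v hv0 hgf x hxl
    rw [htop]
    exact (top_le_iff.mp (htop ▸ hle)).symm
  by_cases hxr : ((g * f).natDegree : ℝ) < x
  · have htop := NP_top_right v hv0 hgf x hxr
    rw [htop]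
    exact (top_le_iff.mp (htop ▸ hle)).symm
  push_neg at hxl hxr
  obtain ⟨A, hA⟩ := exists_argmax v hgf hps x hxl hxr
  obtain ⟨jm, jp, hjmf, hjpf, hjmjp, ejm, ejp, δf, hδf, hpf⟩ := BB_pert v hfs A
  obtain ⟨km, kp, hkmg, hkpg, hkmkp, ekm, ekp, δg, hδg, hpg⟩ := BB_pert v hgs A
  set ε := min δf δg with hεd
  have hε : 0 < ε := lt_min hδf hδg
  obtain ⟨hfu, hfd⟩ := hpf ε hε (min_le_left _ _)
  obtain ⟨hgu, hgd⟩ := hpg ε hε (min_le_right _ _)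
  have hBmul : ∀ a : ℝ, BB v hps a = BB v hfs a + BB v hgs a :=
    fun a => BB_mul v hv0 hadd hmul f g hfs hgs hps a
  have hup : x ≤ (jp : ℝ) + kp := by
    have h1 := hA (A + ε)
    rw [hBmul A, hBmul (A + ε)] at h1
    have h2 : ε * x ≤ ε * ((jp : ℝ) + kp) := by nlinarith
    exact le_of_mul_le_mul_left h2 hε
  have hdown : (jm : ℝ) + km ≤ x := by
    have h1 := hA (A - ε)
    rw [hBmul A, hBmul (A - ε)] at h1
    have h2 : ε * ((jm : ℝ) + km) ≤ ε * x := by nlinarith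
    exact le_of_mul_le_mul_left h2 hε
  set x₁ := max (jm : ℝ) (x - kp) with hx₁
  set x₂ := x - x₁ with hx₂
  have hjmx₁ : (jm : ℝ) ≤ x₁ := le_max_left _ _
  have hx₁jp : x₁ ≤ (jp : ℝ) := max_le (by exact_mod_cast hjmjp) (by linarith)
  have hkmx₂ : (km : ℝ) ≤ x₂ := by
    have hk : (km : ℝ) ≤ kp := by exact_mod_cast hkmkp
    have h1 : x₁ ≤ x - km := max_le (by linarith) (by linarith)
    rw [hx₂]
    linarith
  have hx₂kp : x₂ ≤ (kp : ℝ) := by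
    have := le_max_right (jm : ℝ) (x - kp)
    rw [hx₂, hx₁]
    linarith
  have hNPf := NP_touch v hv0 hfs A jm jp hjmf hjpf ejm ejp x₁ hjmx₁ hx₁jp
  have hNPg := NP_touch v hv0 hgs A km kp hkmg hkpg ekm ekp x₂ hkmx₂ hx₂kp
  refine le_antisymm hle (le_trans (sInf_le ⟨x₁, x₂, by rw [hx₂]; ring, rfl⟩) ?_)
  rw [hNPf, hNPg, ← EReal.coe_add]
  have heq : (A * x₁ + BB v hfs A) + (A * x₂ + BB v hgs A) = A * x + BB v hps A := by
    rw [hBmul A, hx₂]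
    ring
  rw [heq]
  exact NP_ge v x A _ (feas_BB v hv0 hps A)
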